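/- Let m ≥ 1 and let x_1,…,x_m be complex numbers such that x_i + x_j ≠ 0 for all i ≠ j. Then pfaff_{1≤i,j≤m}((x_i − x_j)/(x_i + x_j)) = Π_{1≤i<j≤m} (x_i − x_j)/(x_i + x_j). (This holds for both even and odd m; the diagonal entries of the matrix are 0.) -/

import Mathlib

/-- The pfaffian-type sum `(1/(2^M · M!)) · Σ_σ sgn(σ) · Π_{i=1}^{M} a_{σ(2i−1),σ(2i)}`
with `M = ⌊m/2⌋`. -/
noncomputable def pfaff (m : ℕ) (A : Matrix (Fin m) (Fin m) ℂ) : ℂ :=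
  (1 / ((2 : ℂ) ^ (m / 2) * (Nat.factorial (m / 2) : ℂ))) *
    ∑ σ : Equiv.Perm (Fin m), ((Equiv.Perm.sign σ : ℤ) : ℂ) *
      ∏ i : Fin (m / 2),
        A (σ ⟨2 * (i : ℕ), by have := i.isLt; omega⟩)
          (σ ⟨2 * (i : ℕ) + 1, by have := i.isLt; omega⟩)

open Finset Equiv Equiv.Perm

namespace SchurPf

noncomputable def psum (M : ℕ) {m : ℕ} (h : 2 * M ≤ m) (A : Matrix (Fin m) (Fin m) ℂ) : ℂ :=
  ∑ σ : Equiv.Perm (Fin m), ((Equiv.Perm.sign σ : ℤ) : ℂ) *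
    ∏ i : Fin M,
      A (σ ⟨2 * (i : ℕ), by have := i.isLt; omega⟩)
        (σ ⟨2 * (i : ℕ) + 1, by have := i.isLt; omega⟩)

lemma pfaff_eq (m : ℕ) (A : Matrix (Fin m) (Fin m) ℂ) :
    pfaff m A = (1 / ((2 : ℂ) ^ (m / 2) * (Nat.factorial (m / 2) : ℂ))) *
      psum (m / 2) (by omega) A := rfl

lemma psum_congr {M M' m : ℕ} (hMM' : M = M') (h : 2 * M ≤ m)
    (A : Matrix (Fin m) (Fin m) ℂ) : psum M h A = psum M' (hMM' ▸ h) A := by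
  subst hMM'; rfl

/-- The decomposition permutation: `dE p τ 0 = p`, `dE p τ j.succ = p.succAbove (τ j)`. -/
def dE {n : ℕ} (p : Fin (n + 1)) (τ : Perm (Fin n)) : Perm (Fin (n + 1)) :=
  p.cycleRange⁻¹ * Equiv.Perm.decomposeFin.symm (0, τ)

@[simp] lemma dE_zero {n : ℕ} (p : Fin (n + 1)) (τ : Perm (Fin n)) : dE p τ 0 = p := by
  simp [dE, Equiv.Perm.mul_apply, Equiv.Perm.decomposeFin_symm_apply_zero,
    Equiv.Perm.inv_def]

@[simp] lemma dE_succ {n : ℕ} (p : Fin (n + 1)) (τ : Perm (Fin n)) (j : Fin n) :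
    dE p τ j.succ = p.succAbove (τ j) := by
  simp [dE, Equiv.Perm.mul_apply, Equiv.Perm.decomposeFin_symm_apply_succ,
    Equiv.Perm.inv_def]

lemma dE_sign {n : ℕ} (p : Fin (n + 1)) (τ : Perm (Fin n)) :
    Equiv.Perm.sign (dE p τ) = (-1) ^ (p : ℕ) * Equiv.Perm.sign τ := by
  simp [dE, Equiv.Perm.decomposeFin.symm_sign, Fin.sign_cycleRange]

lemma dE_bijective {n : ℕ} :
    Function.Bijective (fun pt : Fin (n + 1) × Perm (Fin n) => dE pt.1 pt.2) := by
  rw [Fintype.bijective_iff_injective_and_card]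
  constructor
  · rintro ⟨p, τ⟩ ⟨p', τ'⟩ hE
    simp only at hE
    have hp : p = p' := by
      have := congrArg (fun σ : Perm (Fin (n+1)) => σ 0) hE
      simpa using this
    subst hp
    have : Equiv.Perm.decomposeFin.symm (0, τ) = Equiv.Perm.decomposeFin.symm (0, τ') :=
      mul_left_cancel hE
    have := Equiv.Perm.decomposeFin.symm.injective this
    simp only [Prod.mk.injEq] at this
    exact Prod.ext rfl this.2
  · simp [Fintype.card_prod, Fintype.card_perm, Nat.factorial_succ]

lemma sum_decompose {n : ℕ} (g : Perm (Fin (n + 1)) → ℂ) :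
    ∑ σ : Perm (Fin (n + 1)), g σ = ∑ p : Fin (n + 1), ∑ τ : Perm (Fin n), g (dE p τ) := by
  have h1 : ∑ pt : Fin (n + 1) × Perm (Fin n), g (dE pt.1 pt.2) = ∑ σ : Perm (Fin (n + 1)), g σ :=
    Fintype.sum_bijective _ dE_bijective _ g (fun pt => rfl)
  rw [← h1, Fintype.sum_prod_type]

lemma fin_mk_add_one {n v : ℕ} (hv' : v < n + 1) (hv : v + 1 < n + 1) :
    (⟨v, hv'⟩ : Fin (n + 1)) + 1 = ⟨v + 1, hv⟩ := by
  have hlt : (⟨v, hv'⟩ : Fin (n + 1)) < Fin.last n := by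
    simp only [Fin.lt_iff_val_lt_val, Fin.last]
    omega
  ext
  rw [Fin.val_add_one_of_lt hlt]

lemma psum_odd (M : ℕ) (h : 2 * M ≤ 2 * M + 1) (h' : 2 * M ≤ 2 * M)
    (A : Matrix (Fin (2 * M + 1)) (Fin (2 * M + 1)) ℂ) :
    psum M h A = ∑ p : Fin (2 * M + 1), (-1 : ℂ) ^ (p : ℕ) *
      psum M h' (A.submatrix p.succAbove p.succAbove) := by
  have step1 : psum M h A = ∑ σ : Perm (Fin (2 * M + 1)), ((Equiv.Perm.sign σ : ℤ) : ℂ) *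
      ∏ i : Fin M, A (σ ⟨2 * i + 1, by have := i.isLt; omega⟩)
        (σ ⟨2 * i + 2, by have := i.isLt; omega⟩) := by
    unfold psum
    rw [← Equiv.sum_comp (Equiv.mulRight (finRotate (2 * M + 1)))]
    apply Finset.sum_congr rfl
    intro σ _
    have hsign : Equiv.Perm.sign (σ * finRotate (2 * M + 1)) = Equiv.Perm.sign σ := by
      rw [Equiv.Perm.sign_mul, sign_finRotate, Nat.add_sub_cancel, (even_two_mul M).neg_one_pow, mul_one]
    simp only [Equiv.coe_mulRight, hsign]
    congr 1
    apply Finset.prod_congr rfl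
    intro i _
    have hi := i.isLt
    have e1 : (finRotate (2 * M + 1)) ⟨2 * i, by omega⟩ = ⟨2 * i + 1, by omega⟩ := by
      rw [finRotate_succ_apply, fin_mk_add_one]
    have e2 : (finRotate (2 * M + 1)) ⟨2 * i + 1, by omega⟩ = ⟨2 * i + 2, by omega⟩ := by
      rw [finRotate_succ_apply, fin_mk_add_one]
    rw [Equiv.Perm.mul_apply, Equiv.Perm.mul_apply, e1, e2]
  rw [step1, sum_decompose]
  apply Finset.sum_congr rfl
  intro p _
  unfold psum
  rw [Finset.mul_sum]
  apply Finset.sum_congr rfl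
  intro τ _
  have hsign : ((Equiv.Perm.sign (dE p τ) : ℤ) : ℂ)
      = (-1 : ℂ) ^ (p : ℕ) * ((Equiv.Perm.sign τ : ℤ) : ℂ) := by
    rw [dE_sign]
    push_cast
    ring
  rw [hsign, mul_assoc]
  congr 2
  apply Finset.prod_congr rfl
  intro i _
  have hi := i.isLt
  have e1 : (⟨2 * i + 1, by omega⟩ : Fin (2 * M + 1)) = Fin.succ ⟨2 * i, by omega⟩ := rfl
  have e2 : (⟨2 * i + 2, by omega⟩ : Fin (2 * M + 1)) = Fin.succ ⟨2 * i + 1, by omega⟩ := rfl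
  rw [e1, e2, dE_succ, dE_succ]
  rfl

lemma lt1 {M : ℕ} (i : Fin (M + 1)) : 2 * (i : ℕ) < 2 * M + 2 := by have := i.isLt; omega
lemma lt2 {M : ℕ} (i : Fin (M + 1)) : 2 * (i : ℕ) + 1 < 2 * M + 2 := by have := i.isLt; omega
lemma lt3 {M : ℕ} (i : Fin M) : 2 * (i : ℕ) + 1 < 2 * M + 1 := by have := i.isLt; omega
lemma lt4 {M : ℕ} (i : Fin M) : 2 * (i : ℕ) + 2 < 2 * M + 1 := by have := i.isLt; omega

lemma psum_even (M : ℕ) (h : 2 * (M + 1) ≤ 2 * M + 2) (h' : 2 * M ≤ 2 * M + 1)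
    (h'' : 2 * M ≤ 2 * M)
    (A : Matrix (Fin (2 * M + 2)) (Fin (2 * M + 2)) ℂ) :
    psum (M + 1) h A = ∑ p : Fin (2 * M + 2), ∑ q : Fin (2 * M + 1),
      (-1 : ℂ) ^ ((p : ℕ) + (q : ℕ)) * A p (p.succAbove q) *
        psum M h'' (A.submatrix (p.succAbove ∘ q.succAbove) (p.succAbove ∘ q.succAbove)) := by
  unfold psum
  rw [sum_decompose]
  apply Finset.sum_congr rfl
  intro p _
  have step1 : ∀ τ : Perm (Fin (2 * M + 1)),
      ((Equiv.Perm.sign (dE p τ) : ℤ) : ℂ) *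
        ∏ i : Fin (M + 1), A ((dE p τ) ⟨2 * (i : ℕ), lt1 i⟩) ((dE p τ) ⟨2 * (i : ℕ) + 1, lt2 i⟩)
      = (-1 : ℂ) ^ (p : ℕ) * (((Equiv.Perm.sign τ : ℤ) : ℂ) *
          (A p (p.succAbove (τ 0)) *
            ∏ i : Fin M, A (p.succAbove (τ ⟨2 * (i : ℕ) + 1, lt3 i⟩))
              (p.succAbove (τ ⟨2 * (i : ℕ) + 2, lt4 i⟩)))) := by
    intro τ
    have hsign : ((Equiv.Perm.sign (dE p τ) : ℤ) : ℂ)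
        = (-1 : ℂ) ^ (p : ℕ) * ((Equiv.Perm.sign τ : ℤ) : ℂ) := by
      rw [dE_sign]; push_cast; ring
    rw [hsign, Fin.prod_univ_succ, mul_assoc]
    congr 2
    have i0 : (⟨2 * ((0 : Fin (M + 1)) : ℕ), lt1 0⟩ : Fin (2 * M + 2)) = 0 := by
      ext; simp
    have i1 : (⟨2 * ((0 : Fin (M + 1)) : ℕ) + 1, lt2 0⟩ : Fin (2 * M + 2))
        = Fin.succ 0 := by ext; simp
    rw [i0, i1, dE_zero, dE_succ]
    congr 1
    apply Finset.prod_congr rfl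
    intro i _
    have e1 : (⟨2 * ((i.succ : Fin (M + 1)) : ℕ), lt1 i.succ⟩ : Fin (2 * M + 2))
        = Fin.succ ⟨2 * (i : ℕ) + 1, lt3 i⟩ := by ext; simp [Fin.val_succ]; ring
    have e2 : (⟨2 * ((i.succ : Fin (M + 1)) : ℕ) + 1, lt2 i.succ⟩ : Fin (2 * M + 2))
        = Fin.succ ⟨2 * (i : ℕ) + 2, lt4 i⟩ := by ext; simp [Fin.val_succ]; ring
    rw [e1, e2, dE_succ, dE_succ]
  rw [Finset.sum_congr rfl (fun τ _ => step1 τ), ← Finset.mul_sum, sum_decompose]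
  rw [Finset.mul_sum]
  apply Finset.sum_congr rfl
  intro q _
  have hsign2 : ∀ χ : Perm (Fin (2 * M)), ((Equiv.Perm.sign (dE q χ) : ℤ) : ℂ)
      = (-1 : ℂ) ^ (q : ℕ) * ((Equiv.Perm.sign χ : ℤ) : ℂ) := by
    intro χ; rw [dE_sign]; push_cast; ring
  have step2 : ∀ χ : Perm (Fin (2 * M)),
      ((Equiv.Perm.sign (dE q χ) : ℤ) : ℂ) *
        (A p (p.succAbove ((dE q χ) 0)) *
          ∏ i : Fin M, A (p.succAbove ((dE q χ) ⟨2 * (i : ℕ) + 1, lt3 i⟩))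
            (p.succAbove ((dE q χ) ⟨2 * (i : ℕ) + 2, lt4 i⟩))
        )
      = (-1 : ℂ) ^ (q : ℕ) * (A p (p.succAbove q) *
          (((Equiv.Perm.sign χ : ℤ) : ℂ) *
            ∏ i : Fin M,
              (A.submatrix (p.succAbove ∘ q.succAbove) (p.succAbove ∘ q.succAbove))
                (χ ⟨2 * (i : ℕ), by have := i.isLt; omega⟩)
                (χ ⟨2 * (i : ℕ) + 1, by have := i.isLt; omega⟩))) := by
    intro χ
    rw [hsign2 χ, dE_zero]
    have eprod : ∏ i : Fin M, A (p.succAbove ((dE q χ) ⟨2 * (i : ℕ) + 1, lt3 i⟩))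
            (p.succAbove ((dE q χ) ⟨2 * (i : ℕ) + 2, lt4 i⟩))
        = ∏ i : Fin M,
              (A.submatrix (p.succAbove ∘ q.succAbove) (p.succAbove ∘ q.succAbove))
                (χ ⟨2 * (i : ℕ), by have := i.isLt; omega⟩)
                (χ ⟨2 * (i : ℕ) + 1, by have := i.isLt; omega⟩) := by
      apply Finset.prod_congr rfl
      intro i _
      have e1 : (⟨2 * (i : ℕ) + 1, lt3 i⟩ : Fin (2 * M + 1))
          = Fin.succ ⟨2 * (i : ℕ), by have := i.isLt; omega⟩ := rfl
      have e2 : (⟨2 * (i : ℕ) + 2, lt4 i⟩ : Fin (2 * M + 1))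
          = Fin.succ ⟨2 * (i : ℕ) + 1, by have := i.isLt; omega⟩ := rfl
      rw [e1, e2, dE_succ, dE_succ]
      rfl
    rw [eprod]
    ring
  rw [Finset.sum_congr rfl (fun χ _ => step2 χ), ← Finset.mul_sum, ← Finset.mul_sum]
  rw [pow_add]
  ring

lemma image_Ioi_succAbove {n : ℕ} (p : Fin (n + 1)) (i : Fin n) :
    (Finset.Ioi i).image p.succAbove = (Finset.Ioi (p.succAbove i)).erase p := by
  ext y
  simp only [Finset.mem_image, Finset.mem_erase, Finset.mem_Ioi]
  constructor
  · rintro ⟨j, hj, rfl⟩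
    exact ⟨p.succAbove_ne j, Fin.succAbove_lt_succAbove_iff.2 hj⟩
  · rintro ⟨hyp, hy⟩
    obtain ⟨j, rfl⟩ := Fin.exists_succAbove_eq hyp
    exact ⟨j, Fin.succAbove_lt_succAbove_iff.1 hy, rfl⟩

lemma image_filter_succAbove {n : ℕ} (p : Fin (n + 1)) :
    (Finset.univ.filter fun i : Fin n => ¬ p.succAbove i < p).image p.succAbove
      = Finset.Ioi p := by
  ext y
  simp only [Finset.mem_image, Finset.mem_filter, Finset.mem_univ, true_and, Finset.mem_Ioi]
  constructor
  · rintro ⟨j, hj, rfl⟩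
    exact lt_of_le_of_ne (not_lt.1 hj) (Ne.symm (p.succAbove_ne j))
  · intro hy
    obtain ⟨j, rfl⟩ := Fin.exists_succAbove_eq (ne_of_gt hy)
    exact ⟨j, not_lt.2 (le_of_lt hy), rfl⟩

lemma succAbove_lt_self_iff {n : ℕ} (p : Fin (n + 1)) (i : Fin n) :
    p.succAbove i < p ↔ (i : ℕ) < (p : ℕ) := by
  constructor
  · intro hlt
    by_contra hge
    push_neg at hge
    have heq : p.succAbove i = i.succ := Fin.succAbove_of_le_castSucc _ _ (by
      rw [Fin.le_castSucc_iff]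
      simp only [Fin.lt_iff_val_lt_val, Fin.val_succ]
      omega)
    rw [heq, Fin.lt_iff_val_lt_val, Fin.val_succ] at hlt
    omega
  · intro hlt
    have heq : p.succAbove i = i.castSucc := Fin.succAbove_of_castSucc_lt _ _ (by
      simp only [Fin.lt_iff_val_lt_val, Fin.coe_castSucc]; omega)
    rw [heq, Fin.lt_iff_val_lt_val]
    exact hlt

lemma card_filter_succAbove_lt {n : ℕ} (p : Fin (n + 1)) :
    (Finset.univ.filter fun i : Fin n => p.succAbove i < p).card = (p : ℕ) := by
  have hp : (p : ℕ) ≤ n := by have := p.isLt; omega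
  have himg : (Finset.univ.filter fun i : Fin n => p.succAbove i < p).image Fin.val
      = Finset.range (p : ℕ) := by
    ext a
    simp only [Finset.mem_image, Finset.mem_filter, Finset.mem_univ, true_and,
      succAbove_lt_self_iff, Finset.mem_range]
    constructor
    · rintro ⟨i, hi, rfl⟩; exact hi
    · intro ha; exact ⟨⟨a, by omega⟩, ha, rfl⟩
  rw [← Finset.card_image_of_injective _ Fin.val_injective, himg, Finset.card_range]
lemma pairprod_split {n : ℕ} (F : Fin (n + 1) → Fin (n + 1) → ℂ)
    (hF : ∀ i j, F i j = -F j i) (p : Fin (n + 1)) :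
    ∏ i : Fin (n + 1), ∏ j ∈ Finset.Ioi i, F i j
      = (-1 : ℂ) ^ (p : ℕ) * (∏ i : Fin n, F p (p.succAbove i)) *
        ∏ i : Fin n, ∏ j ∈ Finset.Ioi i, F (p.succAbove i) (p.succAbove j) := by
  have hinj : Function.Injective p.succAbove := (Fin.strictMono_succAbove p).injective
  rw [Fin.prod_univ_succAbove (fun i => ∏ j ∈ Finset.Ioi i, F i j) p]
  have inner : ∀ i : Fin n, ∏ j ∈ Finset.Ioi (p.succAbove i), F (p.succAbove i) j
      = (if p.succAbove i < p then F (p.succAbove i) p else 1) *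
        ∏ j ∈ Finset.Ioi i, F (p.succAbove i) (p.succAbove j) := by
    intro i
    have himg : ∏ j ∈ Finset.Ioi i, F (p.succAbove i) (p.succAbove j)
        = ∏ y ∈ (Finset.Ioi (p.succAbove i)).erase p, F (p.succAbove i) y := by
      rw [← image_Ioi_succAbove, Finset.prod_image (fun a _ b _ hab => hinj hab)]
    by_cases hc : p.succAbove i < p
    · rw [if_pos hc, himg, Finset.mul_prod_erase _ _ (Finset.mem_Ioi.2 hc)]
    · rw [if_neg hc, one_mul, himg, Finset.erase_eq_of_notMem (by
        simp only [Finset.mem_Ioi]; exact hc)]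
  simp only [inner]
  rw [Finset.prod_mul_distrib]
  have hite : (∏ i : Fin n, if p.succAbove i < p then F (p.succAbove i) p else 1)
      = (-1 : ℂ) ^ (p : ℕ) *
        ∏ i ∈ Finset.univ.filter (fun i : Fin n => p.succAbove i < p), F p (p.succAbove i) := by
    rw [← Finset.prod_filter]
    rw [Finset.prod_congr rfl (fun i _ => hF (p.succAbove i) p)]
    rw [show (∏ i ∈ Finset.univ.filter (fun i : Fin n => p.succAbove i < p),
          -F p (p.succAbove i))
        = ∏ i ∈ Finset.univ.filter (fun i : Fin n => p.succAbove i < p),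
          ((-1 : ℂ) * F p (p.succAbove i)) from Finset.prod_congr rfl (fun i _ => by ring),
      Finset.prod_mul_distrib, Finset.prod_const, card_filter_succAbove_lt]
  have hrow : (∏ j ∈ Finset.Ioi p, F p j)
      = ∏ i ∈ Finset.univ.filter (fun i : Fin n => ¬ p.succAbove i < p), F p (p.succAbove i) := by
    rw [← image_filter_succAbove p, Finset.prod_image (fun a _ b _ hab => hinj hab)]
  rw [hite, hrow, show ∀ (a b c d : ℂ), a * ((-1:ℂ)^(p:ℕ) * b * c) = (-1:ℂ)^(p:ℕ) * (a * b) * c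
      from fun a b c d => by ring]
  · congr 2
    rw [Finset.prod_filter_not_mul_prod_filter]
  · exact 0

open Polynomial in
lemma IdA {n : ℕ} (hn : Even n) (z : Fin (n + 1) → ℂ) (hz : ∀ i j, z i + z j ≠ 0)
    (hinj : Function.Injective z) :
    ∑ p : Fin (n + 1), ∏ i : Fin n,
      (z p + z (p.succAbove i)) / (z p - z (p.succAbove i)) = 1 := by
  classical
  have hzne : ∀ i, z i ≠ 0 := by
    intro i hi
    exact hz i i (by rw [hi]; ring)
  have hsub : ∀ (p : Fin (n + 1)) (i : Fin n), z p - z (p.succAbove i) ≠ 0 := by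
    intro p i
    refine sub_ne_zero_of_ne (fun e => ?_)
    exact p.succAbove_ne i (hinj e.symm)
  set d : Fin (n + 1) → ℂ := fun p => ∏ i : Fin n, (z p - z (p.succAbove i)) with hd_def
  have hd : ∀ p, d p ≠ 0 := fun p => Finset.prod_ne_zero_iff.2 fun i _ => hsub p i
  set c : Fin (n + 1) → ℂ := fun p => (∏ i : Fin (n + 1), (z p + z i)) / d p with hc_def
  set N : ℂ[X] := ∏ i : Fin (n + 1), (X + C (z i)) with hN_def
  set D : ℂ[X] := ∏ i : Fin (n + 1), (X - C (z i)) with hD_def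
  set L : ℂ[X] := ∑ p : Fin (n + 1), C (c p) * ∏ i : Fin n, (X - C (z (p.succAbove i)))
    with hL_def
  have hNm : N.Monic := monic_prod_of_monic _ _ (fun i _ => monic_X_add_C (z i))
  have hDm : D.Monic := monic_prod_of_monic _ _ (fun i _ => monic_X_sub_C (z i))
  have hNd : N.natDegree = n + 1 := by
    rw [hN_def, natDegree_prod_of_monic _ _ (fun i _ => monic_X_add_C (z i))]
    simp [natDegree_X_add_C]
  have hDd : D.natDegree = n + 1 := by
    rw [hD_def, natDegree_prod_of_monic _ _ (fun i _ => monic_X_sub_C (z i))]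
    simp [natDegree_X_sub_C]
  have hLdeg : L.degree < ((n + 1 : ℕ) : WithBot ℕ) := by
    refine lt_of_le_of_lt (degree_sum_le _ _) ?_
    rw [Finset.sup_lt_iff (by exact WithBot.bot_lt_coe _)]
    intro p _
    refine lt_of_le_of_lt (degree_mul_le _ _) ?_
    have hPm : (∏ i : Fin n, (X - C (z (p.succAbove i)))).Monic :=
      monic_prod_of_monic _ _ (fun i _ => monic_X_sub_C _)
    have hPd : (∏ i : Fin n, (X - C (z (p.succAbove i)))).natDegree = n := by
      rw [natDegree_prod_of_monic _ _ (fun i _ => monic_X_sub_C _)]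
      simp [natDegree_X_sub_C]
    have hdeg : (∏ i : Fin n, (X - C (z (p.succAbove i)))).degree = ((n : ℕ) : WithBot ℕ) := by
      rw [degree_eq_natDegree hPm.ne_zero, hPd]
    rw [hdeg]
    refine lt_of_le_of_lt (add_le_add degree_C_le (le_refl _)) ?_
    rw [zero_add]
    exact_mod_cast WithBot.coe_lt_coe.2 (by omega)
  have hNDdeg : (N - D).degree < ((n + 1 : ℕ) : WithBot ℕ) := by
    have h1 : N.degree = D.degree := by
      rw [degree_eq_natDegree hNm.ne_zero, degree_eq_natDegree hDm.ne_zero, hNd, hDd]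
    have h2 : N.leadingCoeff = D.leadingCoeff := by rw [hNm.leadingCoeff, hDm.leadingCoeff]
    have := degree_sub_lt h1 hNm.ne_zero h2
    rwa [degree_eq_natDegree hNm.ne_zero, hNd] at this
  have hR : N - D - L = 0 := by
    apply eq_zero_of_degree_lt_of_eval_index_eq_zero (v := z) Finset.univ
      (Set.injOn_of_injective hinj)
    · have hcard : (((Finset.univ : Finset (Fin (n + 1))).card : ℕ) : WithBot ℕ)
          = ((n + 1 : ℕ) : WithBot ℕ) := by simp
      rw [hcard]
      exact lt_of_le_of_lt (degree_sub_le _ _) (max_lt hNDdeg hLdeg)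
    · intro l _
      have hevalD : D.eval (z l) = 0 := by
        rw [hD_def, eval_prod]
        exact Finset.prod_eq_zero (Finset.mem_univ l) (by simp)
      have hevalL : L.eval (z l) = ∏ i : Fin (n + 1), (z l + z i) := by
        rw [hL_def, eval_finset_sum]
        rw [Finset.sum_eq_single l ?_ (by simp)]
        · rw [eval_mul, eval_C, eval_prod]
          have : ∏ i : Fin n, eval (z l) (X - C (z (l.succAbove i))) = d l := by
            apply Finset.prod_congr rfl
            intro i _
            simp
          rw [this, hc_def]
          exact div_mul_cancel₀ _ (hd l)
        · intro p _ hpl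
          rw [eval_mul, eval_prod]
          obtain ⟨i0, hi0⟩ := Fin.exists_succAbove_eq (show l ≠ p from fun e => hpl e.symm)
          refine mul_eq_zero_of_right _ (Finset.prod_eq_zero (Finset.mem_univ i0) ?_)
          rw [hi0]
          simp
      have hevalN : N.eval (z l) = ∏ i : Fin (n + 1), (z l + z i) := by
        rw [hN_def, eval_prod]
        simp
      simp only [eval_sub, hevalD, hevalN, hevalL]
      ring
  have h0 := congrArg (eval 0) hR
  have hevN0 : N.eval 0 = ∏ i : Fin (n + 1), z i := by
    rw [hN_def, eval_prod]; simp
  have hevD0 : D.eval 0 = -∏ i : Fin (n + 1), z i := by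
    rw [hD_def, eval_prod]
    have : ∀ i : Fin (n + 1), eval 0 (X - C (z i)) = -1 * z i := by
      intro i; rw [eval_sub, eval_X, eval_C]; ring
    rw [Finset.prod_congr rfl (fun i _ => this i), Finset.prod_mul_distrib,
      Finset.prod_const]
    have : ((-1 : ℂ)) ^ (Finset.univ : Finset (Fin (n + 1))).card = -1 :=
      Odd.neg_one_pow (by simpa using hn.add_one)
    rw [this]; ring
  have hevL0 : L.eval 0 = ∑ p : Fin (n + 1), c p * ∏ i : Fin n, z (p.succAbove i) := by
    rw [hL_def, eval_finset_sum]
    apply Finset.sum_congr rfl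
    intro p _
    rw [eval_mul, eval_C, eval_prod]
    congr 1
    have : ∀ i : Fin n, eval 0 (X - C (z (p.succAbove i))) = -1 * z (p.succAbove i) := by
      intro i; rw [eval_sub, eval_X, eval_C]; ring
    rw [Finset.prod_congr rfl (fun i _ => this i), Finset.prod_mul_distrib,
      Finset.prod_const]
    have hcard : ((-1 : ℂ)) ^ (Finset.univ : Finset (Fin n)).card = 1 :=
      Even.neg_one_pow (by simpa using hn)
    rw [hcard, one_mul]
  rw [eval_sub, eval_sub, hevN0, hevD0, hevL0, eval_zero] at h0
  -- h0 : Z - (-Z) - Σ c p * Zp = 0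
  set Z : ℂ := ∏ i : Fin (n + 1), z i with hZ_def
  have hZne : Z ≠ 0 := Finset.prod_ne_zero_iff.2 fun i _ => hzne i
  have hterm : ∀ p : Fin (n + 1), c p * ∏ i : Fin n, z (p.succAbove i)
      = 2 * Z * ∏ i : Fin n, (z p + z (p.succAbove i)) / (z p - z (p.succAbove i)) := by
    intro p
    have hZp : Z = z p * ∏ i : Fin n, z (p.succAbove i) := by
      rw [hZ_def, Fin.prod_univ_succAbove (fun i => z i) p]
    have hNp : (∏ i : Fin (n + 1), (z p + z i))
        = (z p + z p) * ∏ i : Fin n, (z p + z (p.succAbove i)) := by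
      rw [Fin.prod_univ_succAbove (fun i => z p + z i) p]
    have hy : ∏ i : Fin n, (z p + z (p.succAbove i)) / (z p - z (p.succAbove i))
        = (∏ i : Fin n, (z p + z (p.succAbove i))) / d p := by
      rw [hd_def, ← Finset.prod_div_distrib]
    simp only [hc_def]
    rw [hy, hNp, hZp]
    field_simp
    ring
  rw [Finset.sum_congr rfl (fun p _ => hterm p), ← Finset.mul_sum] at h0
  have h2Z : (2 : ℂ) * Z ≠ 0 := mul_ne_zero two_ne_zero hZne
  have : (2 : ℂ) * Z * (∑ p : Fin (n + 1), ∏ i : Fin n,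
      (z p + z (p.succAbove i)) / (z p - z (p.succAbove i))) = 2 * Z * 1 := by
    rw [mul_one]
    linear_combination -h0
  exact mul_left_cancel₀ h2Z this

open Polynomial in
lemma Brow {n : ℕ} (hn : Even n) (z : Fin (n + 1) → ℂ) (hz : ∀ i j, z i + z j ≠ 0)
    (hinj : Function.Injective z) (t : ℂ) (ht : ∀ i, t + z i ≠ 0) :
    ∑ q : Fin (n + 1), ((t - z q) / (t + z q)) *
        ∏ i : Fin n, (z q + z (q.succAbove i)) / (z q - z (q.succAbove i))
      = ∏ j : Fin (n + 1), (t - z j) / (t + z j) := by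
  classical
  have hsub : ∀ (p : Fin (n + 1)) (i : Fin n), z p - z (p.succAbove i) ≠ 0 := by
    intro p i
    refine sub_ne_zero_of_ne (fun e => ?_)
    exact p.succAbove_ne i (hinj e.symm)
  set y : Fin (n + 1) → ℂ := fun q => ∏ i : Fin n,
    (z q + z (q.succAbove i)) / (z q - z (q.succAbove i)) with hy_def
  set P1 : ℂ[X] := ∑ q : Fin (n + 1), C (y q) *
    ((X - C (z q)) * ∏ i : Fin n, (X + C (z (q.succAbove i)))) with hP1_def
  set P2 : ℂ[X] := ∏ j : Fin (n + 1), (X - C (z j)) with hP2_def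
  have hMm : ∀ q : Fin (n + 1),
      ((X - C (z q)) * ∏ i : Fin n, (X + C (z (q.succAbove i)))).Monic :=
    fun q => (monic_X_sub_C (z q)).mul (monic_prod_of_monic _ _ fun i _ => monic_X_add_C _)
  have hMd : ∀ q : Fin (n + 1),
      ((X - C (z q)) * ∏ i : Fin n, (X + C (z (q.succAbove i)))).natDegree = n + 1 := by
    intro q
    rw [(monic_X_sub_C (z q)).natDegree_mul
      (monic_prod_of_monic _ _ fun i _ => monic_X_add_C _), natDegree_X_sub_C,
      natDegree_prod_of_monic _ _ (fun i _ => monic_X_add_C _)]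
    simp [natDegree_X_add_C]
    omega
  have hP2m : P2.Monic := monic_prod_of_monic _ _ fun j _ => monic_X_sub_C _
  have hP2d : P2.natDegree = n + 1 := by
    rw [hP2_def, natDegree_prod_of_monic _ _ (fun j _ => monic_X_sub_C _)]
    simp [natDegree_X_sub_C]
  have hcoeff : (P2 - P1).coeff (n + 1) = 0 := by
    rw [coeff_sub, hP1_def, finset_sum_coeff]
    have h2 : P2.coeff (n + 1) = 1 := by
      rw [← hP2d]; exact hP2m.coeff_natDegree
    have h1 : ∀ q : Fin (n + 1),
        (C (y q) * ((X - C (z q)) * ∏ i : Fin n, (X + C (z (q.succAbove i))))).coeff (n + 1)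
          = y q := by
      intro q
      rw [coeff_C_mul, show (n + 1) = ((X - C (z q)) *
        ∏ i : Fin n, (X + C (z (q.succAbove i)))).natDegree from (hMd q).symm,
        (hMm q).coeff_natDegree, mul_one]
    rw [Finset.sum_congr rfl (fun q _ => h1 q), h2, IdA hn z hz hinj]
    ring
  have hdegsub : (P2 - P1).degree ≤ ((n + 1 : ℕ) : WithBot ℕ) := by
    refine le_trans (degree_sub_le _ _) (max_le ?_ ?_)
    · rw [degree_eq_natDegree hP2m.ne_zero, hP2d]
    · refine le_trans (degree_sum_le _ _) (Finset.sup_le fun q _ => ?_)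
      refine le_trans (degree_mul_le _ _) ?_
      have : ((X - C (z q)) * ∏ i : Fin n, (X + C (z (q.succAbove i)))).degree
          = ((n + 1 : ℕ) : WithBot ℕ) := by
        rw [degree_eq_natDegree (hMm q).ne_zero, hMd q]
      rw [this]
      refine le_trans (add_le_add degree_C_le (le_refl _)) ?_
      rw [zero_add]
  have hdeglt : (P2 - P1).degree < ((n + 1 : ℕ) : WithBot ℕ) := by
    rw [degree_lt_iff_coeff_zero]
    intro m hm
    rcases eq_or_lt_of_le hm with hm' | hm'
    · rw [show m = n + 1 from by exact_mod_cast hm'.symm]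
      exact hcoeff
    · refine coeff_eq_zero_of_degree_lt (lt_of_le_of_lt hdegsub ?_)
      exact_mod_cast hm'
  have hQ : P2 - P1 = 0 := by
    apply eq_zero_of_degree_lt_of_eval_index_eq_zero (v := fun l => -z l) Finset.univ
      (Set.injOn_of_injective fun a b hab => hinj (neg_injective hab))
    · simpa using hdeglt
    · intro l _
      have hevalP2 : P2.eval (-z l) = (-z l - z l) * ∏ i : Fin n, (-z l - z (l.succAbove i)) := by
        rw [hP2_def, eval_prod]
        rw [Fin.prod_univ_succAbove (fun j => eval (-z l) (X - C (z j))) l]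
        simp
      have hevalP1 : P1.eval (-z l)
          = y l * ((-z l - z l) * ∏ i : Fin n, (-z l + z (l.succAbove i))) := by
        rw [hP1_def, eval_finset_sum]
        rw [Finset.sum_eq_single l ?_ (by simp)]
        · rw [eval_mul, eval_C, eval_mul, eval_prod]
          simp
        · intro q _ hql
          rw [eval_mul, eval_C, eval_mul, eval_prod]
          obtain ⟨i0, hi0⟩ := Fin.exists_succAbove_eq (show l ≠ q from fun e => hql e.symm)
          refine mul_eq_zero_of_right _ (mul_eq_zero_of_right _
            (Finset.prod_eq_zero (Finset.mem_univ i0) ?_))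
          rw [hi0]
          simp
      rw [eval_sub, hevalP2, hevalP1]
      have hdl : (∏ i : Fin n, (z l - z (l.succAbove i))) ≠ 0 :=
        Finset.prod_ne_zero_iff.2 fun i _ => hsub l i
      have hneg1 : ((-1 : ℂ)) ^ (Finset.univ : Finset (Fin n)).card = 1 :=
        Even.neg_one_pow (by simpa using hn)
      have e1 : ∏ i : Fin n, (-z l - z (l.succAbove i))
          = ∏ i : Fin n, (z l + z (l.succAbove i)) := by
        rw [Finset.prod_congr rfl (fun i (_ : i ∈ Finset.univ) =>
          show -z l - z (l.succAbove i) = -1 * (z l + z (l.succAbove i)) by ring),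
          Finset.prod_mul_distrib, Finset.prod_const, hneg1, one_mul]
      have e2 : ∏ i : Fin n, (-z l + z (l.succAbove i))
          = ∏ i : Fin n, (z l - z (l.succAbove i)) := by
        rw [Finset.prod_congr rfl (fun i (_ : i ∈ Finset.univ) =>
          show -z l + z (l.succAbove i) = -1 * (z l - z (l.succAbove i)) by ring),
          Finset.prod_mul_distrib, Finset.prod_const, hneg1, one_mul]
      have hyP : y l = (∏ i : Fin n, (z l + z (l.succAbove i))) /
          (∏ i : Fin n, (z l - z (l.succAbove i))) := by
        rw [hy_def, ← Finset.prod_div_distrib]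
      have key : ∏ i : Fin n, (-z l - z (l.succAbove i))
          = y l * ∏ i : Fin n, (-z l + z (l.succAbove i)) := by
        rw [e1, hyP, e2, div_mul_cancel₀ _ hdl]
      rw [key]
      ring
  have hTprod : (∏ j : Fin (n + 1), (t + z j)) ≠ 0 :=
    Finset.prod_ne_zero_iff.2 fun j _ => ht j
  have hP2t : P2.eval t = ∏ j : Fin (n + 1), (t - z j) := by
    rw [hP2_def, eval_prod]; simp
  have hP1t : P1.eval t
      = ∑ q : Fin (n + 1), y q * ((t - z q) * ∏ i : Fin n, (t + z (q.succAbove i))) := by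
    rw [hP1_def, eval_finset_sum]
    apply Finset.sum_congr rfl
    intro q _
    rw [eval_mul, eval_C, eval_mul, eval_prod]
    simp
  have hP1eq : P1.eval t = ∏ j : Fin (n + 1), (t - z j) := by
    have hh := congrArg (eval t) hQ
    rw [eval_sub, eval_zero, sub_eq_zero] at hh
    rw [← hh, hP2t]
  have hfinal : (∑ q : Fin (n + 1), ((t - z q) / (t + z q)) * y q) *
      (∏ j : Fin (n + 1), (t + z j)) = ∏ j : Fin (n + 1), (t - z j) := by
    rw [Finset.sum_mul]
    have hterm : ∀ q : Fin (n + 1), ((t - z q) / (t + z q)) * y q *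
        (∏ j : Fin (n + 1), (t + z j))
        = y q * ((t - z q) * ∏ i : Fin n, (t + z (q.succAbove i))) := by
      intro q
      rw [Fin.prod_univ_succAbove (fun j => t + z j) q]
      field_simp [ht q]
    rw [Finset.sum_congr rfl (fun q _ => hterm q), ← hP1t, hP1eq]
  rw [show ∏ j : Fin (n + 1), (t - z j) / (t + z j)
      = (∏ j : Fin (n + 1), (t - z j)) / (∏ j : Fin (n + 1), (t + z j)) from
    Finset.prod_div_distrib _ _, eq_div_iff hTprod, hfinal]

lemma schur_antisym {m : ℕ} (x : Fin m → ℂ) (i j : Fin m) :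
    (x i - x j) / (x i + x j) = -((x j - x i) / (x j + x i)) := by
  rw [add_comm (x j) (x i), ← neg_div, neg_sub]

lemma psum_schur : ∀ (m : ℕ) (x : Fin m → ℂ), (∀ i j, x i + x j ≠ 0) →
    Function.Injective x →
    ∀ (M : ℕ), (m = 2 * M ∨ m = 2 * M + 1) → ∀ (h : 2 * M ≤ m),
    psum M h (Matrix.of fun i j => (x i - x j) / (x i + x j))
      = 2 ^ M * (Nat.factorial M : ℂ) *
        ∏ i : Fin m, ∏ j ∈ Finset.Ioi i, (x i - x j) / (x i + x j) := by
  intro m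
  induction m using Nat.strong_induction_on with
  | _ m IH =>
    intro x hx hinj M hm h
    have hFne : ∀ i j : Fin m, i ≠ j → (x i - x j) / (x i + x j) ≠ 0 := by
      intro i j hij
      exact div_ne_zero (sub_ne_zero_of_ne fun e => hij (hinj e)) (hx i j)
    rcases hm with hm | hm
    · -- even case : m = 2 * M
      rcases Nat.eq_zero_or_pos M with hM0 | hMpos
      · subst hM0
        have hm0 : m = 0 := by omega
        subst hm0
        have huniv : ∀ σ : Perm (Fin 0), σ = 1 := by
          intro σ; ext i; exact absurd i.isLt (by omega)
        unfold psum
        rw [Finset.sum_eq_single (1 : Perm (Fin 0)) (fun σ _ hσ => absurd (huniv σ) hσ)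
          (fun h1 => absurd (Finset.mem_univ _) h1)]
        simp [Nat.factorial]
      · obtain ⟨M', rfl⟩ : ∃ M', M = M' + 1 := ⟨M - 1, by omega⟩
        have hm2 : m = 2 * M' + 2 := by omega
        clear hm
        subst hm2
        have hF : ∀ i j : Fin (2 * M' + 2),
            (x i - x j) / (x i + x j) = -((x j - x i) / (x j + x i)) :=
          fun i j => schur_antisym x i j
        rw [psum_even M' h (by omega) (by omega)]
        have hsubne : ∀ (i j : Fin (2 * M' + 2)), i ≠ j → x i - x j ≠ 0 :=
          fun i j hij => sub_ne_zero_of_ne fun e => hij (hinj e)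
        have hper : ∀ p : Fin (2 * M' + 2),
            ∑ q : Fin (2 * M' + 1), (-1 : ℂ) ^ ((p : ℕ) + (q : ℕ)) *
              (Matrix.of fun i j => (x i - x j) / (x i + x j)) p (p.succAbove q) *
              psum M' (by omega)
                ((Matrix.of fun i j => (x i - x j) / (x i + x j)).submatrix
                  (p.succAbove ∘ q.succAbove) (p.succAbove ∘ q.succAbove))
            = 2 ^ M' * (Nat.factorial M' : ℂ) *
                (∏ i : Fin (2 * M' + 2), ∏ j ∈ Finset.Ioi i, (x i - x j) / (x i + x j)) := by
          intro p
          have hperq : ∀ q : Fin (2 * M' + 1),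
              (-1 : ℂ) ^ ((p : ℕ) + (q : ℕ)) *
                (Matrix.of fun i j => (x i - x j) / (x i + x j)) p (p.succAbove q) *
                psum M' (by omega)
                  ((Matrix.of fun i j => (x i - x j) / (x i + x j)).submatrix
                    (p.succAbove ∘ q.succAbove) (p.succAbove ∘ q.succAbove))
              = (2 ^ M' * (Nat.factorial M' : ℂ) *
                  (∏ i : Fin (2 * M' + 2), ∏ j ∈ Finset.Ioi i, (x i - x j) / (x i + x j))) *
                ((∏ i : Fin (2 * M'),
                    (x p + x (p.succAbove (q.succAbove i))) /
                      (x p - x (p.succAbove (q.succAbove i)))) *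
                  (∏ i : Fin (2 * M'),
                    (x (p.succAbove q) + x (p.succAbove (q.succAbove i))) /
                      (x (p.succAbove q) - x (p.succAbove (q.succAbove i))))) := by
            intro q
            have hIH : psum M' (by omega : 2 * M' ≤ 2 * M')
                ((Matrix.of fun i j => (x i - x j) / (x i + x j)).submatrix
                  (p.succAbove ∘ q.succAbove) (p.succAbove ∘ q.succAbove))
                = 2 ^ M' * (Nat.factorial M' : ℂ) *
                  ∏ i : Fin (2 * M'), ∏ j ∈ Finset.Ioi i,
                    (x (p.succAbove (q.succAbove i)) - x (p.succAbove (q.succAbove j))) /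
                      (x (p.succAbove (q.succAbove i)) + x (p.succAbove (q.succAbove j))) := by
              have := IH (2 * M') (by omega) (x ∘ (p.succAbove ∘ q.succAbove))
                (fun i j => hx _ _)
                (hinj.comp ((Fin.strictMono_succAbove p).comp
                  (Fin.strictMono_succAbove q)).injective)
                M' (Or.inl rfl) (by omega)
              exact this
            have hK1 := pairprod_split (fun i j => (x i - x j) / (x i + x j)) hF p
            have hK2 := pairprod_split
              (fun i j => (x (p.succAbove i) - x (p.succAbove j)) /
                (x (p.succAbove i) + x (p.succAbove j)))
              (fun i j => schur_antisym (x ∘ p.succAbove) i j) q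
            set Rp : ℂ := ∏ i : Fin (2 * M' + 1),
              (x p - x (p.succAbove i)) / (x p + x (p.succAbove i)) with hRp_def
            set Spq : ℂ := ∏ i : Fin (2 * M'),
              (x (p.succAbove q) - x (p.succAbove (q.succAbove i))) /
                (x (p.succAbove q) + x (p.succAbove (q.succAbove i))) with hSpq_def
            set Ppq : ℂ := ∏ i : Fin (2 * M'), ∏ j ∈ Finset.Ioi i,
              (x (p.succAbove (q.succAbove i)) - x (p.succAbove (q.succAbove j))) /
                (x (p.succAbove (q.succAbove i)) + x (p.succAbove (q.succAbove j)))
              with hPpq_def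
            have hFne' : ∀ i j : Fin (2 * M' + 2), i ≠ j →
                (x i - x j) / (x i + x j) ≠ 0 := hFne
            have hRpne : Rp ≠ 0 := Finset.prod_ne_zero_iff.2 fun i _ =>
              hFne p (p.succAbove i) fun e => p.succAbove_ne i e.symm
            have hSpqne : Spq ≠ 0 := Finset.prod_ne_zero_iff.2 fun i _ =>
              hFne (p.succAbove q) (p.succAbove (q.succAbove i)) fun e =>
                q.succAbove_ne i ((Fin.strictMono_succAbove p).injective e).symm
            have hFpkne : (x p - x (p.succAbove q)) / (x p + x (p.succAbove q)) ≠ 0 :=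
              hFne p (p.succAbove q) fun e => p.succAbove_ne q e.symm
            -- pull q out of Rp
            have hpull : Rp = ((x p - x (p.succAbove q)) / (x p + x (p.succAbove q))) *
                ∏ i : Fin (2 * M'), (x p - x (p.succAbove (q.succAbove i))) /
                  (x p + x (p.succAbove (q.succAbove i))) := by
              rw [hRp_def]
              exact Fin.prod_univ_succAbove
                (fun i => (x p - x (p.succAbove i)) / (x p + x (p.succAbove i))) q
            set Wpq : ℂ := ∏ i : Fin (2 * M'), (x p - x (p.succAbove (q.succAbove i))) /
                  (x p + x (p.succAbove (q.succAbove i))) with hWpq_def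
            have hWpqne : Wpq ≠ 0 := Finset.prod_ne_zero_iff.2 fun i _ =>
              hFne p (p.succAbove (q.succAbove i)) fun e =>
                (p.succAbove_ne (q.succAbove i)) e.symm
            have hinv1 : ∏ i : Fin (2 * M'),
                (x p + x (p.succAbove (q.succAbove i))) /
                  (x p - x (p.succAbove (q.succAbove i))) = Wpq⁻¹ := by
              rw [hWpq_def, ← Finset.prod_inv_distrib]
              exact Finset.prod_congr rfl fun i _ => (inv_div _ _).symm
            have hinv2 : ∏ i : Fin (2 * M'),
                (x (p.succAbove q) + x (p.succAbove (q.succAbove i))) /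
                  (x (p.succAbove q) - x (p.succAbove (q.succAbove i))) = Spq⁻¹ := by
              rw [hSpq_def, ← Finset.prod_inv_distrib]
              exact Finset.prod_congr rfl fun i _ => (inv_div _ _).symm
            rw [hIH, hinv1, hinv2]
            simp only [Matrix.of_apply]
            have hbig : (∏ i : Fin (2 * M' + 2), ∏ j ∈ Finset.Ioi i, (x i - x j) / (x i + x j))
                = (-1 : ℂ) ^ (p : ℕ) * Rp * ((-1 : ℂ) ^ (q : ℕ) * Spq * Ppq) := by
              rw [hK1, hK2]
            rw [hbig, hpull, pow_add]
            field_simp [hWpqne, hSpqne, hx p (p.succAbove q),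
              hsubne p (p.succAbove q) (fun e => p.succAbove_ne q e.symm)]
          rw [Finset.sum_congr rfl (fun q _ => hperq q), ← Finset.mul_sum]
          have hBrow := Brow (n := 2 * M') (even_two_mul M') (x ∘ p.succAbove)
            (fun i j => hx _ _) (hinj.comp (Fin.strictMono_succAbove p).injective)
            (x p) (fun i => hx p (p.succAbove i))
          simp only [Function.comp_apply] at hBrow
          have hGne : (∏ j : Fin (2 * M' + 1),
              (x p + x (p.succAbove j)) / (x p - x (p.succAbove j))) ≠ 0 :=
            Finset.prod_ne_zero_iff.2 fun j _ => div_ne_zero (hx p (p.succAbove j))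
              (hsubne p (p.succAbove j) fun e => p.succAbove_ne j e.symm)
          have hfac : ∀ q : Fin (2 * M' + 1),
              ∏ i : Fin (2 * M'), (x p + x (p.succAbove (q.succAbove i))) /
                  (x p - x (p.succAbove (q.succAbove i)))
              = (∏ j : Fin (2 * M' + 1),
                  (x p + x (p.succAbove j)) / (x p - x (p.succAbove j))) *
                ((x p - x (p.succAbove q)) / (x p + x (p.succAbove q))) := by
            intro q
            have hpullG := Fin.prod_univ_succAbove
              (fun j => (x p + x (p.succAbove j)) / (x p - x (p.succAbove j))) q
            rw [hpullG]
            have hAA : ((x p + x (p.succAbove q)) / (x p - x (p.succAbove q))) *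
                ((x p - x (p.succAbove q)) / (x p + x (p.succAbove q))) = 1 := by
              rw [div_mul_div_comm, div_eq_one_iff_eq]
              · ring
              · exact mul_ne_zero (hsubne p (p.succAbove q) fun e => p.succAbove_ne q e.symm)
                  (hx p (p.succAbove q))
            linear_combination (-(∏ i : Fin (2 * M'), (x p + x (p.succAbove (q.succAbove i))) /
              (x p - x (p.succAbove (q.succAbove i))))) * hAA
          have hsum1 : ∑ q : Fin (2 * M' + 1),
              (∏ i : Fin (2 * M'), (x p + x (p.succAbove (q.succAbove i))) /
                  (x p - x (p.succAbove (q.succAbove i)))) *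
                (∏ i : Fin (2 * M'),
                  (x (p.succAbove q) + x (p.succAbove (q.succAbove i))) /
                    (x (p.succAbove q) - x (p.succAbove (q.succAbove i)))) = 1 := by
            rw [Finset.sum_congr rfl (fun q _ => by rw [hfac q, mul_assoc, mul_comm
              ((x p - x (p.succAbove q)) / (x p + x (p.succAbove q))) _, ← mul_assoc,
              mul_assoc])]
            rw [← Finset.mul_sum]
            have hGG : ∑ q : Fin (2 * M' + 1),
                (∏ i : Fin (2 * M'),
                  (x (p.succAbove q) + x (p.succAbove (q.succAbove i))) /
                    (x (p.succAbove q) - x (p.succAbove (q.succAbove i)))) *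
                ((x p - x (p.succAbove q)) / (x p + x (p.succAbove q)))
                = ∏ j : Fin (2 * M' + 1), (x p - x (p.succAbove j)) / (x p + x (p.succAbove j)) := by
              rw [← hBrow]
              apply Finset.sum_congr rfl
              intro q _
              ring
            rw [hGG]
            have hinvG : ∏ j : Fin (2 * M' + 1),
                (x p - x (p.succAbove j)) / (x p + x (p.succAbove j))
                = (∏ j : Fin (2 * M' + 1),
                  (x p + x (p.succAbove j)) / (x p - x (p.succAbove j)))⁻¹ := by
              rw [← Finset.prod_inv_distrib]
              exact Finset.prod_congr rfl fun j _ => (inv_div _ _).symm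
            rw [hinvG, mul_inv_cancel₀ hGne]
          rw [hsum1, mul_one]
        rw [Finset.sum_congr rfl (fun p _ => hper p), Finset.sum_const, Finset.card_univ,
          Fintype.card_fin, nsmul_eq_mul]
        push_cast [Nat.factorial_succ]
        ring
    · -- odd case : m = 2 * M + 1
      subst hm
      rw [psum_odd M h (by omega)]
      have hstep : ∀ p : Fin (2 * M + 1),
          psum M (by omega : 2 * M ≤ 2 * M)
            ((Matrix.of fun i j => (x i - x j) / (x i + x j)).submatrix
              p.succAbove p.succAbove)
          = 2 ^ M * (Nat.factorial M : ℂ) *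
            ∏ i : Fin (2 * M), ∏ j ∈ Finset.Ioi i,
              (x (p.succAbove i) - x (p.succAbove j)) /
                (x (p.succAbove i) + x (p.succAbove j)) := by
        intro p
        have := IH (2 * M) (by omega) (x ∘ p.succAbove)
          (fun i j => hx _ _) (hinj.comp (Fin.strictMono_succAbove p).injective)
          M (Or.inl rfl) (by omega)
        exact this
      rw [Finset.sum_congr rfl (fun p _ => by rw [hstep p])]
      have hsplit : ∀ p : Fin (2 * M + 1),
          ∏ i : Fin (2 * M), ∏ j ∈ Finset.Ioi i,
              (x (p.succAbove i) - x (p.succAbove j)) /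
                (x (p.succAbove i) + x (p.succAbove j))
          = (-1 : ℂ) ^ (p : ℕ) *
            (∏ i : Fin (2 * M), (x p + x (p.succAbove i)) / (x p - x (p.succAbove i))) *
            ∏ i : Fin (2 * M + 1), ∏ j ∈ Finset.Ioi i, (x i - x j) / (x i + x j) := by
        intro p
        have hK := pairprod_split (fun i j => (x i - x j) / (x i + x j))
          (fun i j => schur_antisym x i j) p
        have hRp : (∏ i : Fin (2 * M), (x p - x (p.succAbove i)) / (x p + x (p.succAbove i)))
            ≠ 0 := Finset.prod_ne_zero_iff.2 fun i _ =>
          hFne p (p.succAbove i) (fun e => p.succAbove_ne i e.symm)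
        have hinvR : (∏ i : Fin (2 * M),
              (x p - x (p.succAbove i)) / (x p + x (p.succAbove i)))⁻¹
            = ∏ i : Fin (2 * M), (x p + x (p.succAbove i)) / (x p - x (p.succAbove i)) := by
          rw [← Finset.prod_inv_distrib]
          exact Finset.prod_congr rfl fun i _ => inv_div _ _
        have hpm : ((-1 : ℂ) ^ (p : ℕ)) * ((-1 : ℂ) ^ (p : ℕ)) = 1 := by
          rw [← pow_add]
          exact Even.neg_one_pow ⟨(p : ℕ), rfl⟩
        calc ∏ i : Fin (2 * M), ∏ j ∈ Finset.Ioi i,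
              (x (p.succAbove i) - x (p.succAbove j)) /
                (x (p.succAbove i) + x (p.succAbove j))
            = ((-1 : ℂ) ^ (p : ℕ) *
                (∏ i : Fin (2 * M), (x p - x (p.succAbove i)) / (x p + x (p.succAbove i))))⁻¹ *
              ((-1 : ℂ) ^ (p : ℕ) *
                (∏ i : Fin (2 * M), (x p - x (p.succAbove i)) / (x p + x (p.succAbove i))) *
                ∏ i : Fin (2 * M), ∏ j ∈ Finset.Ioi i,
                  (x (p.succAbove i) - x (p.succAbove j)) /
                    (x (p.succAbove i) + x (p.succAbove j))) := by
              rw [inv_mul_cancel_left₀]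
              exact mul_ne_zero (pow_ne_zero _ (neg_ne_zero.2 one_ne_zero)) hRp
          _ = ((-1 : ℂ) ^ (p : ℕ) *
                (∏ i : Fin (2 * M), (x p - x (p.succAbove i)) / (x p + x (p.succAbove i))))⁻¹ *
              ∏ i : Fin (2 * M + 1), ∏ j ∈ Finset.Ioi i, (x i - x j) / (x i + x j) := by
              rw [← hK]
          _ = (-1 : ℂ) ^ (p : ℕ) *
            (∏ i : Fin (2 * M), (x p + x (p.succAbove i)) / (x p - x (p.succAbove i))) *
            ∏ i : Fin (2 * M + 1), ∏ j ∈ Finset.Ioi i, (x i - x j) / (x i + x j) := by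
              rw [mul_inv, hinvR, ← inv_pow]
              congr 2
              rw [inv_neg, inv_one]
      rw [Finset.sum_congr rfl (fun p _ => by rw [hsplit p])]
      have hfin : ∀ p : Fin (2 * M + 1), (-1 : ℂ) ^ (p : ℕ) *
          (2 ^ M * (Nat.factorial M : ℂ) *
            ((-1 : ℂ) ^ (p : ℕ) *
              (∏ i : Fin (2 * M), (x p + x (p.succAbove i)) / (x p - x (p.succAbove i))) *
              ∏ i : Fin (2 * M + 1), ∏ j ∈ Finset.Ioi i, (x i - x j) / (x i + x j)))
          = 2 ^ M * (Nat.factorial M : ℂ) *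
            (∏ i : Fin (2 * M + 1), ∏ j ∈ Finset.Ioi i, (x i - x j) / (x i + x j)) *
            (∏ i : Fin (2 * M), (x p + x (p.succAbove i)) / (x p - x (p.succAbove i))) := by
        intro p
        have hpm : ((-1 : ℂ) ^ (p : ℕ)) * ((-1 : ℂ) ^ (p : ℕ)) = 1 := by
          rw [← pow_add]
          exact Even.neg_one_pow ⟨(p : ℕ), rfl⟩
        calc (-1 : ℂ) ^ (p : ℕ) * (2 ^ M * (Nat.factorial M : ℂ) *
              ((-1 : ℂ) ^ (p : ℕ) * (∏ i : Fin (2 * M),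
                  (x p + x (p.succAbove i)) / (x p - x (p.succAbove i))) *
                ∏ i : Fin (2 * M + 1), ∏ j ∈ Finset.Ioi i, (x i - x j) / (x i + x j)))
            = ((-1 : ℂ) ^ (p : ℕ) * (-1 : ℂ) ^ (p : ℕ)) * (2 ^ M * (Nat.factorial M : ℂ) *
              ((∏ i : Fin (2 * M),
                  (x p + x (p.succAbove i)) / (x p - x (p.succAbove i))) *
                ∏ i : Fin (2 * M + 1), ∏ j ∈ Finset.Ioi i, (x i - x j) / (x i + x j))) := by
              ring
          _ = _ := by rw [hpm]; ring
      rw [Finset.sum_congr rfl (fun p _ => hfin p), ← Finset.mul_sum,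
        IdA (even_two_mul M) x hx hinj, mul_one]

lemma psum_schur_all (m : ℕ) (x : Fin m → ℂ) (hx : ∀ i j, i ≠ j → x i + x j ≠ 0)
    (h : 2 * (m / 2) ≤ m) :
    psum (m / 2) h (Matrix.of fun i j => (x i - x j) / (x i + x j))
      = 2 ^ (m / 2) * (Nat.factorial (m / 2) : ℂ) *
        ∏ i : Fin m, ∏ j ∈ Finset.Ioi i, (x i - x j) / (x i + x j) := by
  classical
  haveI : Filter.NeBot (nhdsWithin (0 : ℂ) {(0 : ℂ)}ᶜ) := NormedField.nhdsNE_neBot (0 : ℂ)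
  set y : ℂ → Fin m → ℂ := fun t i => x i + t * (((i : ℕ) : ℂ) + 1) with hy_def
  have hne_ev : ∀ w : ℂ, ∀ᶠ t in nhdsWithin (0 : ℂ) {(0 : ℂ)}ᶜ, t ≠ w := by
    intro w
    rcases eq_or_ne w 0 with rfl | hw
    · exact eventually_mem_nhdsWithin.mono fun t ht => ht
    · exact Filter.Eventually.filter_mono nhdsWithin_le_nhds (eventually_ne_nhds hw.symm)
  have hlin : ∀ (a c : ℂ), c ≠ 0 → ∀ᶠ t in nhdsWithin (0 : ℂ) {(0 : ℂ)}ᶜ,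
      a + t * c ≠ 0 := by
    intro a c hc
    filter_upwards [hne_ev (-(a / c))] with t ht h0
    apply ht
    field_simp
    linear_combination h0
  have hcast_ne : ∀ i : Fin m, (((i : ℕ) : ℂ) + 1) ≠ 0 := by
    intro i
    have : ((((i : ℕ) + 1 : ℕ)) : ℂ) ≠ 0 := Nat.cast_ne_zero.2 (by omega)
    push_cast at this
    exact this
  have hgen : ∀ᶠ t in nhdsWithin (0 : ℂ) {(0 : ℂ)}ᶜ,
      (∀ i j : Fin m, y t i + y t j ≠ 0) ∧ Function.Injective (y t) := by
    have h1 : ∀ᶠ t in nhdsWithin (0 : ℂ) {(0 : ℂ)}ᶜ, ∀ i j : Fin m, y t i + y t j ≠ 0 := by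
      refine Filter.eventually_all.2 fun i => Filter.eventually_all.2 fun j => ?_
      have hc : ((((i : ℕ) : ℂ) + 1) + (((j : ℕ) : ℂ) + 1)) ≠ 0 := by
        have : ((((i : ℕ) + (j : ℕ) + 2 : ℕ)) : ℂ) ≠ 0 := Nat.cast_ne_zero.2 (by omega)
        push_cast at this
        intro e
        apply this
        linear_combination e
      filter_upwards [hlin (x i + x j) _ hc] with t ht
      intro e
      apply ht
      rw [hy_def] at e
      linear_combination e
    have h2 : ∀ᶠ t in nhdsWithin (0 : ℂ) {(0 : ℂ)}ᶜ,
        ∀ i j : Fin m, i ≠ j → y t i ≠ y t j := by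
      refine Filter.eventually_all.2 fun i => Filter.eventually_all.2 fun j => ?_
      rcases eq_or_ne i j with rfl | hij
      · exact Filter.Eventually.of_forall fun t hne => absurd rfl hne
      · have hc : (((i : ℕ) : ℂ) - ((j : ℕ) : ℂ)) ≠ 0 := by
          refine sub_ne_zero_of_ne fun e => hij ?_
          exact Fin.ext (Nat.cast_injective e)
        filter_upwards [hlin (x i - x j) _ hc] with t ht
        intro _ e
        apply ht
        rw [hy_def] at e
        linear_combination e
    filter_upwards [h1, h2] with t ht1 ht2
    refine ⟨ht1, fun a b hab => ?_⟩
    by_contra hne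
    exact ht2 a b hne hab
  have hlt : ∀ (a c : ℂ), Filter.Tendsto (fun t : ℂ => a + t * c) (nhds 0) (nhds a) := by
    intro a c
    have hcont : Continuous fun t : ℂ => a + t * c :=
      continuous_const.add (continuous_id.mul continuous_const)
    have := hcont.tendsto 0
    simpa using this
  have hcont : ∀ i j : Fin m, Filter.Tendsto (fun t => (y t i - y t j) / (y t i + y t j))
      (nhds 0) (nhds ((x i - x j) / (x i + x j))) := by
    intro i j
    rcases eq_or_ne i j with rfl | hij
    · have hfun : (fun t => (y t i - y t i) / (y t i + y t i)) = fun _ => (0 : ℂ) := by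
        funext t; rw [sub_self, zero_div]
      rw [hfun, show (x i - x i) / (x i + x i) = 0 by rw [sub_self, zero_div]]
      exact tendsto_const_nhds
    · have hnum : (fun t => y t i - y t j)
          = fun t => (x i - x j) + t * ((((i : ℕ) : ℂ) + 1) - (((j : ℕ) : ℂ) + 1)) := by
        funext t; rw [hy_def]; ring
      have hden : (fun t => y t i + y t j)
          = fun t => (x i + x j) + t * ((((i : ℕ) : ℂ) + 1) + (((j : ℕ) : ℂ) + 1)) := by
        funext t; rw [hy_def]; ring
      refine Filter.Tendsto.div ?_ ?_ (hx i j hij)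
      · rw [hnum]; exact hlt _ _
      · rw [hden]; exact hlt _ _
  have hF : Filter.Tendsto (fun t => psum (m / 2) h
        (Matrix.of fun i j => (y t i - y t j) / (y t i + y t j))) (nhds 0)
      (nhds (psum (m / 2) h (Matrix.of fun i j => (x i - x j) / (x i + x j)))) := by
    unfold psum
    apply tendsto_finset_sum
    intro σ _
    apply Filter.Tendsto.const_mul
    apply tendsto_finset_prod
    intro i _
    exact hcont _ _
  have hG : Filter.Tendsto (fun t => 2 ^ (m / 2) * (Nat.factorial (m / 2) : ℂ) *
        ∏ i : Fin m, ∏ j ∈ Finset.Ioi i, (y t i - y t j) / (y t i + y t j)) (nhds 0)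
      (nhds (2 ^ (m / 2) * (Nat.factorial (m / 2) : ℂ) *
        ∏ i : Fin m, ∏ j ∈ Finset.Ioi i, (x i - x j) / (x i + x j))) := by
    apply Filter.Tendsto.const_mul
    apply tendsto_finset_prod
    intro i _
    apply tendsto_finset_prod
    intro j _
    exact hcont i j
  have hEq : (fun t => psum (m / 2) h
        (Matrix.of fun i j => (y t i - y t j) / (y t i + y t j)))
      =ᶠ[nhdsWithin (0 : ℂ) {(0 : ℂ)}ᶜ]
      (fun t => 2 ^ (m / 2) * (Nat.factorial (m / 2) : ℂ) *
        ∏ i : Fin m, ∏ j ∈ Finset.Ioi i, (y t i - y t j) / (y t i + y t j)) := by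
    filter_upwards [hgen] with t ht
    exact psum_schur m (y t) ht.1 ht.2 (m / 2) (by omega) h
  exact tendsto_nhds_unique (hF.mono_left nhdsWithin_le_nhds)
    (Filter.Tendsto.congr' hEq.symm (hG.mono_left nhdsWithin_le_nhds))

end SchurPf

/-- Schur's pfaffian evaluation:
`pfaff((x_i − x_j)/(x_i + x_j)) = Π_{i<j} (x_i − x_j)/(x_i + x_j)`. -/
theorem schur_pfaffian (m : ℕ) (hm : 1 ≤ m) (x : Fin m → ℂ)
    (hx : ∀ i j, i ≠ j → x i + x j ≠ 0) :
    pfaff m (Matrix.of fun i j => (x i - x j) / (x i + x j)) =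
      ∏ i : Fin m, ∏ j ∈ Finset.Ioi i, (x i - x j) / (x i + x j) := by
  have hc : ((2 : ℂ) ^ (m / 2) * (Nat.factorial (m / 2) : ℂ)) ≠ 0 :=
    mul_ne_zero (pow_ne_zero _ two_ne_zero) (Nat.cast_ne_zero.2 (Nat.factorial_ne_zero _))
  rw [SchurPf.pfaff_eq, SchurPf.psum_schur_all m x hx (by omega), one_div,
    inv_mul_cancel_left₀ hc]
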